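/- Fourier inversion identity with singular kernel (the computation establishing equations (3) and (4) of the paper): let t > 0, x ∈ ℝ, and let g : [0, t] → ℝ be a bounded Borel measurable function such that ∫₀ᵗ |g(t − s) − g(t)| s^{−3/2} ds < ∞. Then the function λ ↦ e^{−λ²t/2} cos(λx) + ∫₀ᵗ e^{−λ²(t−s)/2} (λ²/2) g(s) ds − g(t) is Lebesgue integrable on ℝ, and (1/(2π)) ∫_ℝ ( e^{−λ²t/2} cos(λx) + ∫₀ᵗ e^{−λ²(t−s)/2} (λ²/2) g(s) ds − g(t) ) dλ = (1/√(2πt)) e^{−x²/(2t)} + (1/(2√(2π))) ∫₀ᵗ (g(t − s) − g(t)) s^{−3/2} ds − g(t)/√(2πt). -/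

import Mathlib

open MeasureTheory Filter Topology Real

noncomputable section

lemma intCos (a x : ℝ) (ha : 0 < a) :
    Integrable (fun l : ℝ => Real.exp (-a * l^2) * Real.cos (l * x)) := by
  refine (integrable_exp_neg_mul_sq ha).mono' ?_ ?_
  · exact ((Real.continuous_exp.comp (by continuity)).mul
      (Real.continuous_cos.comp (by continuity))).aestronglyMeasurable
  · refine Filter.Eventually.of_forall fun l => ?_
    rw [Real.norm_eq_abs, abs_mul, abs_of_pos (Real.exp_pos _)]
    nlinarith [Real.abs_cos_le_one (l * x), Real.exp_pos (-a * l^2),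
      abs_nonneg (Real.cos (l*x))]

lemma intSin (a x : ℝ) (ha : 0 < a) :
    Integrable (fun l : ℝ => Real.exp (-a * l^2) * Real.sin (l * x)) := by
  refine (integrable_exp_neg_mul_sq ha).mono' ?_ ?_
  · exact ((Real.continuous_exp.comp (by continuity)).mul
      (Real.continuous_sin.comp (by continuity))).aestronglyMeasurable
  · refine Filter.Eventually.of_forall fun l => ?_
    rw [Real.norm_eq_abs, abs_mul, abs_of_pos (Real.exp_pos _)]
    nlinarith [Real.abs_sin_le_one (l * x), Real.exp_pos (-a * l^2),
      abs_nonneg (Real.sin (l*x))]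

lemma intSq (a : ℝ) (ha : 0 < a) :
    Integrable (fun l : ℝ => l^2 * Real.exp (-a * l^2)) := by
  have h := integrable_rpow_mul_exp_neg_mul_sq ha (s := 2) (by norm_num)
  refine h.congr (Filter.Eventually.of_forall fun l => ?_)
  show l ^ (2:ℝ) * Real.exp (-a * l ^ 2) = l^2 * Real.exp (-a * l^2)
  rw [show (2:ℝ) = ((2:ℕ):ℝ) by norm_num, Real.rpow_natCast]

lemma L1 (a x : ℝ) (ha : 0 < a) :
    ∫ l : ℝ, Real.exp (-a * l^2) * Real.cos (l * x)
      = Real.sqrt (π / a) * Real.exp (-x^2 / (4 * a)) := by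
  have hb : 0 < (a : ℂ).re := by simpa using ha
  have h := fourierIntegral_gaussian hb (x : ℂ)
  have key : ∀ l : ℝ, Complex.exp (Complex.I * (x:ℂ) * (l:ℂ)) * Complex.exp (-(a:ℂ) * (l:ℂ) ^ 2)
      = ((Real.exp (-a * l^2) * Real.cos (l * x) : ℝ) : ℂ)
        + ((Real.exp (-a * l^2) * Real.sin (l * x) : ℝ) : ℂ) * Complex.I := by
    intro l
    have h1 : Complex.I * (x:ℂ) * (l:ℂ) = ((l * x : ℝ) : ℂ) * Complex.I := by push_cast; ring
    rw [h1, Complex.exp_mul_I]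
    have h2 : -(a:ℂ) * (l:ℂ)^2 = ((-a * l^2 : ℝ) : ℂ) := by push_cast; ring
    rw [h2, ← Complex.ofReal_exp, ← Complex.ofReal_cos, ← Complex.ofReal_sin]
    push_cast
    ring
  rw [show (fun l : ℝ => Complex.exp (Complex.I * (x:ℂ) * (l:ℂ)) * Complex.exp (-(a:ℂ) * (l:ℂ) ^ 2))
      = fun l : ℝ => ((Real.exp (-a * l^2) * Real.cos (l * x) : ℝ) : ℂ)
        + ((Real.exp (-a * l^2) * Real.sin (l * x) : ℝ) : ℂ) * Complex.I from funext key] at h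
  have i1 : Integrable (fun l : ℝ => ((Real.exp (-a * l^2) * Real.cos (l * x) : ℝ) : ℂ)) volume :=
    (intCos a x ha).ofReal
  have i2 : Integrable (fun l : ℝ => ((Real.exp (-a * l^2) * Real.sin (l * x) : ℝ) : ℂ) * Complex.I)
      volume := ((intSin a x ha).ofReal).mul_const Complex.I
  have e1 : (∫ l : ℝ, ((Real.exp (-a * l^2) * Real.cos (l * x) : ℝ) : ℂ))
      = ((∫ l : ℝ, Real.exp (-a * l^2) * Real.cos (l * x) : ℝ) : ℂ) := integral_ofReal
  have e2 : (∫ l : ℝ, ((Real.exp (-a * l^2) * Real.sin (l * x) : ℝ) : ℂ))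
      = ((∫ l : ℝ, Real.exp (-a * l^2) * Real.sin (l * x) : ℝ) : ℂ) := integral_ofReal
  rw [integral_add i1 i2, integral_mul_const, e1, e2] at h
  have hrhs : ((π:ℂ) / (a:ℂ)) ^ (1/2 : ℂ) * Complex.exp (-(x:ℂ) ^ 2 / (4 * (a:ℂ)))
      = ((Real.sqrt (π / a) * Real.exp (-x^2 / (4 * a)) : ℝ) : ℂ) := by
    have h1 : ((π:ℂ) / (a:ℂ)) ^ (1/2 : ℂ) = ((Real.sqrt (π/a) : ℝ) : ℂ) := by
      rw [show ((π:ℂ) / (a:ℂ)) = (((π/a : ℝ)) : ℂ) by push_cast; ring,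
        show (1/2 : ℂ) = ((1/2 : ℝ) : ℂ) by norm_num,
        ← Complex.ofReal_cpow (by positivity), Real.sqrt_eq_rpow]
    have h2 : Complex.exp (-(x:ℂ) ^ 2 / (4 * (a:ℂ))) = ((Real.exp (-x^2/(4*a)) : ℝ) : ℂ) := by
      rw [show (-(x:ℂ)^2 / (4 * (a:ℂ))) = ((-x^2/(4*a) : ℝ) : ℂ) by push_cast; ring,
        Complex.ofReal_exp]
    rw [h1, h2]; push_cast; ring
  rw [hrhs] at h
  have := congrArg Complex.re h
  simpa only [Complex.add_re, Complex.ofReal_re, Complex.mul_re, Complex.I_re, Complex.I_im,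
    Complex.ofReal_im, mul_zero, mul_one, zero_mul, sub_zero, add_zero, zero_sub,
    neg_zero] using this

lemma L2 (a : ℝ) (ha : 0 < a) :
    ∫ l : ℝ, l^2 * Real.exp (-a * l^2) = Real.sqrt (π / a) / (2 * a) := by
  have h0 : ∫ l : ℝ, l^2 * Real.exp (-a * l^2)
      = 2 * ∫ x in Set.Ioi (0:ℝ), x^2 * Real.exp (-a * x^2) := by
    rw [← integral_comp_abs (f := fun y => y^2 * Real.exp (-a * y^2))]
    congr 1; funext l; simp [sq_abs]
  rw [h0]
  have h2 : ∫ x in Set.Ioi (0:ℝ), x^2 * Real.exp (-a * x^2)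
      = ∫ x in Set.Ioi (0:ℝ), x ^ (2:ℝ) * Real.exp (-a * x ^ (2:ℝ)) := by
    refine setIntegral_congr_fun measurableSet_Ioi (fun y hy => ?_)
    rw [show y ^ (2:ℝ) = y ^ (2:ℕ) from Real.rpow_natCast y 2]
  rw [h2, _root_.integral_rpow_mul_exp_neg_mul_rpow (p := 2) (q := 2) (by norm_num)
    (by norm_num) ha]
  have hg : Real.Gamma ((2 + 1) / 2) = Real.sqrt π / 2 := by
    rw [show ((2:ℝ) + 1) / 2 = 1/2 + 1 by norm_num, Real.Gamma_add_one (by norm_num),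
      Real.Gamma_one_half_eq]
    ring
  rw [hg]
  have ha' : Real.sqrt a ≠ 0 := by positivity
  have h3 : a ^ (-((2:ℝ) + 1) / 2) = 1 / (a * Real.sqrt a) := by
    rw [show (-((2:ℝ) + 1) / 2) = -(1 + 1/2) by norm_num, Real.rpow_neg ha.le,
      Real.rpow_add ha, Real.rpow_one, ← Real.sqrt_eq_rpow]
    field_simp
  rw [h3, Real.sqrt_div pi_pos.le]
  field_simp

/-- value of the kernel integral in `l`. -/
lemma L5 (u : ℝ) (hu : 0 < u) :
    ∫ l : ℝ, Real.exp (-l^2 * u / 2) * (l^2 / 2)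
      = Real.sqrt (2 * π) / 2 * (1 / u ^ ((3:ℝ)/2)) := by
  have hu2 : 0 < u / 2 := by linarith
  have h0 : (fun l : ℝ => Real.exp (-l^2 * u / 2) * (l^2 / 2))
      = fun l : ℝ => (1/2 : ℝ) * (l^2 * Real.exp (-(u/2) * l^2)) := by
    funext l
    rw [show -l^2 * u / 2 = -(u/2) * l^2 by ring]
    ring
  rw [h0, integral_const_mul, L2 _ hu2]
  have h32 : u ^ ((3:ℝ)/2) = u * Real.sqrt u := by
    rw [show (3:ℝ)/2 = 1 + 1/2 by norm_num, Real.rpow_add hu, Real.rpow_one,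
      ← Real.sqrt_eq_rpow]
  have h1 : Real.sqrt (π / (u/2)) = Real.sqrt π / Real.sqrt (u/2) :=
    Real.sqrt_div pi_pos.le _
  have h2 : Real.sqrt (2*π) = Real.sqrt 2 * Real.sqrt π := Real.sqrt_mul (by norm_num) _
  have h3 : Real.sqrt (u/2) = Real.sqrt u / Real.sqrt 2 := Real.sqrt_div hu.le 2
  have hsu : Real.sqrt u ≠ 0 := by positivity
  have hs2 : Real.sqrt 2 ≠ 0 := by positivity
  rw [h32, h1, h2, h3]
  have h22 : Real.sqrt 2 * Real.sqrt 2 = 2 := Real.mul_self_sqrt (by norm_num)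
  field_simp

/-- integrability of the kernel in `l`. -/
lemma intKer (u : ℝ) (hu : 0 < u) (c : ℝ) :
    Integrable (fun l : ℝ => Real.exp (-l^2 * u / 2) * (l^2 / 2) * c) := by
  have hu2 : 0 < u / 2 := by linarith
  have h0 : (fun l : ℝ => Real.exp (-l^2 * u / 2) * (l^2 / 2) * c)
      = fun l : ℝ => (c/2 : ℝ) * (l^2 * Real.exp (-(u/2) * l^2)) := by
    funext l
    rw [show -l^2 * u / 2 = -(u/2) * l^2 by ring]
    ring
  rw [h0]
  exact (intSq _ hu2).const_mul _

/-- FTC computation on `Ioc 0 t`. -/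
lemma L3 (t l : ℝ) (ht : 0 ≤ t) :
    ∫ u in Set.Ioc (0:ℝ) t, Real.exp (-l^2 * u / 2) * (l^2 / 2)
      = 1 - Real.exp (-l^2 * t / 2) := by
  rw [← intervalIntegral.integral_of_le ht]
  have hderiv : ∀ u ∈ Set.uIcc (0:ℝ) t,
      HasDerivAt (fun u : ℝ => -Real.exp (-l^2 * u / 2))
        (Real.exp (-l^2 * u / 2) * (l^2 / 2)) u := by
    intro u _
    have h1 : HasDerivAt (fun u : ℝ => -l^2 * u / 2) (-l^2/2) u := by
      have h0 : (fun u : ℝ => -l^2 * u / 2) = fun u : ℝ => (-l^2/2) * u := by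
        funext v; ring
      rw [h0]
      simpa using (hasDerivAt_id u).const_mul (-l^2/2)
    have h2 := (h1.exp).neg
    exact h2.congr_deriv (by ring)
  have hcont : IntervalIntegrable (fun u : ℝ => Real.exp (-l^2 * u / 2) * (l^2 / 2))
      volume 0 t := by
    apply Continuous.intervalIntegrable
    continuity
  rw [intervalIntegral.integral_eq_sub_of_hasDerivAt hderiv hcont]
  simp
  ring
/-- Fourier inversion identity with singular kernel: the analytic computation
establishing equations (3) and (4) of the paper. -/
theorem fourier_inversion_with_singular_kernel
    (t x : ℝ) (ht : 0 < t) (g : ℝ → ℝ)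
    (hg_meas : Measurable g)
    (hg_bdd : ∃ C : ℝ, ∀ s ∈ Set.Icc (0:ℝ) t, |g s| ≤ C)
    (hint : IntegrableOn (fun s : ℝ => (g (t - s) - g t) / s ^ ((3:ℝ)/2))
      (Set.Ioc 0 t) volume) :
    Integrable
      (fun l : ℝ =>
        Real.exp (-l^2 * t / 2) * Real.cos (l * x)
          + (∫ s in Set.Ioc (0:ℝ) t, Real.exp (-l^2 * (t - s) / 2) * (l^2 / 2) * g s)
          - g t) volume ∧
    (1 / (2 * π)) *
        (∫ l : ℝ,
          (Real.exp (-l^2 * t / 2) * Real.cos (l * x)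
            + (∫ s in Set.Ioc (0:ℝ) t, Real.exp (-l^2 * (t - s) / 2) * (l^2 / 2) * g s)
            - g t))
      = (1 / Real.sqrt (2 * π * t)) * Real.exp (-x^2 / (2 * t))
        + (1 / (2 * Real.sqrt (2 * π))) *
            (∫ s in Set.Ioc (0:ℝ) t, (g (t - s) - g t) / s ^ ((3:ℝ)/2))
        - g t / Real.sqrt (2 * π * t) := by
  obtain ⟨C, hC⟩ := hg_bdd
  have ht2 : 0 < t / 2 := by linarith
  have hmeas2 : Measurable (fun u : ℝ => g (t - u) - g t) :=
    (hg_meas.comp (measurable_const.sub measurable_id)).sub measurable_const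
  -- product integrability
  have hG : Integrable (fun p : ℝ × ℝ =>
      Real.exp (-p.1^2 * p.2 / 2) * (p.1^2 / 2) * (g (t - p.2) - g t))
      (volume.prod (volume.restrict (Set.Ioc (0:ℝ) t))) := by
    have hGm : AEStronglyMeasurable (fun p : ℝ × ℝ =>
        Real.exp (-p.1^2 * p.2 / 2) * (p.1^2 / 2) * (g (t - p.2) - g t))
        (volume.prod (volume.restrict (Set.Ioc (0:ℝ) t))) := by
      apply Measurable.aestronglyMeasurable
      have m1 : Measurable (fun p : ℝ × ℝ => Real.exp (-p.1^2 * p.2/2) * (p.1^2/2)) := by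
        fun_prop
      exact m1.mul ((hg_meas.comp (measurable_const.sub measurable_snd)).sub measurable_const)
    rw [integrable_prod_iff' hGm]
    constructor
    · filter_upwards [ae_restrict_mem measurableSet_Ioc] with u hu
      exact intKer u hu.1 _
    · have heq : ∀ᵐ u ∂(volume.restrict (Set.Ioc (0:ℝ) t)),
          Real.sqrt (2*π)/2 * ‖(g (t - u) - g t) / u ^ ((3:ℝ)/2)‖
          = (∫ l : ℝ, ‖Real.exp (-l^2*u/2) * (l^2/2) * (g (t-u) - g t)‖) := by
        filter_upwards [ae_restrict_mem measurableSet_Ioc] with u hu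
        have hnorm : (fun l : ℝ => ‖Real.exp (-l^2*u/2) * (l^2/2) * (g (t-u) - g t)‖)
            = fun l : ℝ => Real.exp (-l^2*u/2) * (l^2/2) * ‖g (t-u) - g t‖ := by
          funext l
          rw [norm_mul, norm_mul, Real.norm_eq_abs, Real.norm_eq_abs,
            abs_of_pos (Real.exp_pos _), abs_of_nonneg (by positivity : (0:ℝ) ≤ l^2/2)]
        rw [hnorm, integral_mul_const, L5 u hu.1, norm_div,
          Real.norm_eq_abs (u ^ ((3:ℝ)/2)), abs_of_pos (Real.rpow_pos_of_pos hu.1 _)]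
        ring
      exact ((hint.norm.const_mul (Real.sqrt (2*π)/2)).congr heq)
  have hΦint : Integrable (fun l : ℝ => ∫ u in Set.Ioc (0:ℝ) t,
      Real.exp (-l^2*u/2) * (l^2/2) * (g (t-u) - g t)) volume := hG.integral_prod_left
  -- swap + value
  have hswap : (∫ l : ℝ, ∫ u in Set.Ioc (0:ℝ) t,
        Real.exp (-l^2*u/2) * (l^2/2) * (g (t-u) - g t))
      = ∫ u in Set.Ioc (0:ℝ) t, ∫ l : ℝ,
        Real.exp (-l^2*u/2) * (l^2/2) * (g (t-u) - g t) :=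
    integral_integral_swap hG
  have hval : (∫ u in Set.Ioc (0:ℝ) t, ∫ l : ℝ,
        Real.exp (-l^2*u/2) * (l^2/2) * (g (t-u) - g t))
      = Real.sqrt (2*π)/2 * ∫ s in Set.Ioc (0:ℝ) t, (g (t-s) - g t) / s ^ ((3:ℝ)/2) := by
    rw [← integral_const_mul]
    refine setIntegral_congr_fun measurableSet_Ioc (fun u hu => ?_)
    have hne : u ^ ((3:ℝ)/2) ≠ 0 := ne_of_gt (Real.rpow_pos_of_pos hu.1 _)
    rw [integral_mul_const, L5 u hu.1]
    field_simp
  -- pointwise inner identity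
  have hA : ∀ l : ℝ, (∫ s in Set.Ioc (0:ℝ) t, Real.exp (-l^2 * (t - s) / 2) * (l^2 / 2) * g s)
      = (∫ u in Set.Ioc (0:ℝ) t, Real.exp (-l^2*u/2) * (l^2/2) * (g (t-u) - g t))
        + g t * (1 - Real.exp (-l^2 * t / 2)) := by
    intro l
    have hsub : (∫ s in Set.Ioc (0:ℝ) t, Real.exp (-l^2 * (t - s) / 2) * (l^2 / 2) * g s)
        = ∫ u in Set.Ioc (0:ℝ) t, Real.exp (-l^2*u/2) * (l^2/2) * g (t-u) := by
      rw [← intervalIntegral.integral_of_le ht.le, ← intervalIntegral.integral_of_le ht.le]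
      calc ∫ s in (0:ℝ)..t, Real.exp (-l^2 * (t - s) / 2) * (l^2 / 2) * g s
          = ∫ s in (0:ℝ)..t,
            (fun u => Real.exp (-l^2*u/2) * (l^2/2) * g (t-u)) (t - s) := by
            apply intervalIntegral.integral_congr
            intro s _
            simp only [sub_sub_cancel]
        _ = ∫ u in (t-t)..(t-0),
            (fun u => Real.exp (-l^2*u/2) * (l^2/2) * g (t-u)) u :=
            intervalIntegral.integral_comp_sub_left
              (fun u => Real.exp (-l^2*u/2) * (l^2/2) * g (t-u)) t
        _ = ∫ u in (0:ℝ)..t, Real.exp (-l^2*u/2) * (l^2/2) * g (t-u) := by norm_num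
    rw [hsub]
    have i1 : IntegrableOn (fun u : ℝ => Real.exp (-l^2*u/2) * (l^2/2) * (g (t-u) - g t))
        (Set.Ioc 0 t) volume := by
      have hconst : IntegrableOn (fun _ : ℝ => (l^2/2) * (2*C)) (Set.Ioc (0:ℝ) t) volume :=
        integrableOn_const measure_Ioc_lt_top.ne
      refine hconst.mono' ?_ ?_
      · have : Measurable (fun u : ℝ => Real.exp (-l^2*u/2) * (l^2/2) * (g (t-u) - g t)) := by
          have m1 : Measurable (fun u : ℝ => Real.exp (-l^2*u/2) * (l^2/2)) := by fun_prop
          exact m1.mul hmeas2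
        exact this.aestronglyMeasurable
      · filter_upwards [ae_restrict_mem measurableSet_Ioc] with u hu
        have he1 : Real.exp (-l^2*u/2) ≤ 1 := by
          rw [Real.exp_le_one_iff]
          nlinarith [sq_nonneg l, hu.1.le]
        have hgb : |g (t-u) - g t| ≤ 2*C := by
          have b1 : |g (t-u)| ≤ C := hC _ ⟨by linarith [hu.2], by linarith [hu.1.le]⟩
          have b2 : |g t| ≤ C := hC _ ⟨ht.le, le_refl t⟩
          calc |g (t-u) - g t| ≤ |g (t-u)| + |g t| := abs_sub _ _
            _ ≤ 2*C := by linarith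
        rw [Real.norm_eq_abs, abs_mul, abs_mul, abs_of_pos (Real.exp_pos _),
          abs_of_nonneg (by positivity : (0:ℝ) ≤ l^2/2)]
        calc Real.exp (-l^2*u/2) * (l^2/2) * |g (t-u) - g t|
            ≤ 1 * (l^2/2) * (2*C) := by
              apply mul_le_mul (mul_le_mul_of_nonneg_right he1 (by positivity)) hgb
                (abs_nonneg _)
              positivity
          _ = (l^2/2) * (2*C) := by ring
    have i2 : IntegrableOn (fun u : ℝ => Real.exp (-l^2*u/2) * (l^2/2) * g t)
        (Set.Ioc 0 t) volume := by
      apply Continuous.integrableOn_Ioc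
      fun_prop
    have hsplit : (∫ u in Set.Ioc (0:ℝ) t, Real.exp (-l^2*u/2) * (l^2/2) * g (t-u))
        = (∫ u in Set.Ioc (0:ℝ) t, Real.exp (-l^2*u/2) * (l^2/2) * (g (t-u) - g t))
          + ∫ u in Set.Ioc (0:ℝ) t, Real.exp (-l^2*u/2) * (l^2/2) * g t := by
      rw [← integral_add i1 i2]
      refine setIntegral_congr_fun measurableSet_Ioc (fun u _ => ?_)
      ring
    rw [hsplit, integral_mul_const, L3 t l ht.le]
    ring
  -- decomposition of the integrand
  have hdecomp : (fun l : ℝ =>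
        Real.exp (-l^2 * t / 2) * Real.cos (l * x)
          + (∫ s in Set.Ioc (0:ℝ) t, Real.exp (-l^2 * (t - s) / 2) * (l^2 / 2) * g s)
          - g t)
      = fun l : ℝ =>
        (Real.exp (-l^2 * t / 2) * Real.cos (l * x) - g t * Real.exp (-l^2 * t / 2))
          + ∫ u in Set.Ioc (0:ℝ) t, Real.exp (-l^2*u/2) * (l^2/2) * (g (t-u) - g t) := by
    funext l
    rw [hA l]
    ring
  have hint1 : Integrable (fun l : ℝ =>
      Real.exp (-l^2 * t / 2) * Real.cos (l * x) - g t * Real.exp (-l^2 * t / 2)) volume := by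
    have := (intCos (t/2) x ht2).sub ((integrable_exp_neg_mul_sq ht2).const_mul (g t))
    refine this.congr (Filter.Eventually.of_forall fun l => ?_)
    rw [Pi.sub_apply]
    beta_reduce
    rw [show -(t/2) * l^2 = -l^2 * t / 2 by ring]
  constructor
  · rw [hdecomp]
    exact hint1.add hΦint
  · have ic : Integrable (fun l : ℝ => Real.exp (-l^2 * t / 2) * Real.cos (l * x)) volume :=
      (intCos (t/2) x ht2).congr (Filter.Eventually.of_forall fun l => by
        beta_reduce
        rw [show -(t/2) * l^2 = -l^2 * t / 2 by ring])
    have ie : Integrable (fun l : ℝ => g t * Real.exp (-l^2 * t / 2)) volume :=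
      ((integrable_exp_neg_mul_sq ht2).const_mul (g t)).congr
        (Filter.Eventually.of_forall fun l => by
          beta_reduce
          rw [show -(t/2) * l^2 = -l^2 * t / 2 by ring])
    have e3 : ∫ l : ℝ, Real.exp (-l^2 * t / 2) * Real.cos (l * x)
        = Real.sqrt (π/(t/2)) * Real.exp (-x^2 / (2*t)) := by
      rw [show (fun l : ℝ => Real.exp (-l^2 * t / 2) * Real.cos (l * x))
          = fun l : ℝ => Real.exp (-(t/2) * l^2) * Real.cos (l * x) from
          funext fun l => by rw [show -l^2 * t / 2 = -(t/2) * l^2 by ring],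
        L1 (t/2) x ht2, show 4 * (t/2) = 2 * t by ring]
    have e4 : ∫ l : ℝ, Real.exp (-l^2 * t / 2) = Real.sqrt (π/(t/2)) := by
      rw [show (fun l : ℝ => Real.exp (-l^2 * t / 2))
          = fun l : ℝ => Real.exp (-(t/2) * l^2) from
          funext fun l => by rw [show -l^2 * t / 2 = -(t/2) * l^2 by ring],
        integral_gaussian]
    have hsub' : (fun l : ℝ =>
          Real.exp (-l^2 * t / 2) * Real.cos (l * x) - g t * Real.exp (-l^2 * t / 2))
        = fun l : ℝ => Real.exp (-l^2 * t / 2) * Real.cos (l * x)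
          - g t * Real.exp (-l^2 * t / 2) := rfl
    rw [hdecomp, integral_add hint1 hΦint, integral_sub ic ie, integral_const_mul, e3, e4,
      hswap, hval]
    have hπt : π / (t/2) = 2 * π / t := by field_simp
    rw [hπt]
    have h1 : Real.sqrt (2*π/t) = Real.sqrt (2*π) / Real.sqrt t :=
      Real.sqrt_div (by positivity) t
    have h2 : Real.sqrt (2*π*t) = Real.sqrt (2*π) * Real.sqrt t := by
      rw [Real.sqrt_mul (by positivity : (0:ℝ) ≤ 2*π)]
    rw [h1, h2]
    set s2 := Real.sqrt (2*π) with hs2def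
    set st := Real.sqrt t with hstdef
    have hs2 : 0 < s2 := Real.sqrt_pos.mpr (by positivity)
    have hst : 0 < st := Real.sqrt_pos.mpr ht
    have h3 : s2 * s2 = 2 * π := Real.mul_self_sqrt (by positivity)
    rw [← h3]
    field_simp
    ring
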